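/- Let A ∈ ℝ^{n×n} be symmetric positive definite, M ∈ ℝ^{n×n} invertible with M + Mᵀ − A symmetric positive definite, and M̃ = M(M + Mᵀ − A)⁻¹Mᵀ. Let P ∈ ℝ^{n×n_c} have full column rank and let R ∈ ℝ^{n_c×n} satisfy RP = I_c. Define K = sup_{e≠0} ‖(I − PR)e‖_{M̃}² / ‖e‖_A², and let E_TG = (I − M⁻¹A)(I − P(PᵀAP)⁻¹PᵀA) be the two-grid error propagator. Then ‖E_TG‖_A² ≤ 1 − 1/K, where ‖E_TG‖_A denotes the operator norm induced by the A-norm. -/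

import Mathlib

open Matrix

lemma dot_shift {m k : ℕ} (B : Matrix (Fin m) (Fin k) ℝ) (x : Fin k → ℝ) (y : Fin m → ℝ) :
    (B *ᵥ x) ⬝ᵥ y = x ⬝ᵥ (Bᵀ *ᵥ y) := by
  rw [Matrix.dotProduct_mulVec, Matrix.vecMul_transpose]

lemma qform_shift {m k : ℕ} (B : Matrix (Fin m) (Fin k) ℝ) (C : Matrix (Fin m) (Fin m) ℝ)
    (e : Fin k → ℝ) : (B *ᵥ e) ⬝ᵥ (C *ᵥ (B *ᵥ e)) = e ⬝ᵥ ((Bᵀ * C * B) *ᵥ e) := by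
  rw [dot_shift, Matrix.mulVec_mulVec, Matrix.mulVec_mulVec, Matrix.mul_assoc]

lemma herm_transpose {m : ℕ} {B : Matrix (Fin m) (Fin m) ℝ} (hB : B.IsHermitian) : Bᵀ = B := by
  rw [← Matrix.conjTranspose_eq_transpose_of_trivial]; exact hB.eq

lemma dot_symm {m : ℕ} {B : Matrix (Fin m) (Fin m) ℝ} (hB : Bᵀ = B) (u v : Fin m → ℝ) :
    u ⬝ᵥ (B *ᵥ v) = v ⬝ᵥ (B *ᵥ u) := by
  rw [dotProduct_comm, dot_shift, hB]

lemma psd_cs {m : ℕ} {B : Matrix (Fin m) (Fin m) ℝ} (hB : B.PosSemidef)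
    (x y : Fin m → ℝ) :
    (x ⬝ᵥ (B *ᵥ y))^2 ≤ (x ⬝ᵥ (B *ᵥ x)) * (y ⬝ᵥ (B *ᵥ y)) := by
  have key : ∀ t : ℝ, 0 ≤ (y ⬝ᵥ (B *ᵥ y)) * (t * t) + (2 * (x ⬝ᵥ (B *ᵥ y))) * t
      + (x ⬝ᵥ (B *ᵥ x)) := by
    intro t
    have h := hB.dotProduct_mulVec_nonneg (x + t • y)
    simp only [star_trivial, Matrix.mulVec_add, Matrix.mulVec_smul, dotProduct_add,
      add_dotProduct, dotProduct_smul, smul_dotProduct, smul_eq_mul] at h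
    rw [dot_symm (herm_transpose hB.isHermitian) y x] at h
    ring_nf at h ⊢
    linarith
  have hd := discrim_le_zero key
  simp only [discrim] at hd
  nlinarith [hd]

lemma qf_continuous {m : ℕ} (B : Matrix (Fin m) (Fin m) ℝ) :
    Continuous fun e : Fin m → ℝ => e ⬝ᵥ (B *ᵥ e) := by
  simp only [dotProduct, Matrix.mulVec]
  fun_prop

lemma qf_smul {m : ℕ} (B : Matrix (Fin m) (Fin m) ℝ) (c : ℝ) (e : Fin m → ℝ) :
    (c • e) ⬝ᵥ (B *ᵥ (c • e)) = c^2 * (e ⬝ᵥ (B *ᵥ e)) := by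
  rw [Matrix.mulVec_smul, dotProduct_smul, smul_dotProduct]
  simp [smul_eq_mul]; ring

lemma exists_ratio_bound {m : ℕ} (B A : Matrix (Fin m) (Fin m) ℝ) (hA : A.PosDef) :
    ∃ c : ℝ, ∀ e : Fin m → ℝ, e ≠ 0 →
      (e ⬝ᵥ (B *ᵥ e)) / (e ⬝ᵥ (A *ᵥ e)) ≤ c := by
  by_cases hex : ∃ e : Fin m → ℝ, e ≠ 0
  · obtain ⟨e₁, he₁⟩ := hex
    have : Nontrivial (Fin m → ℝ) := nontrivial_of_ne e₁ 0 he₁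
    have hS : IsCompact (Metric.sphere (0 : Fin m → ℝ) 1) := isCompact_sphere 0 1
    have hSne : (Metric.sphere (0 : Fin m → ℝ) 1).Nonempty :=
      NormedSpace.sphere_nonempty.mpr zero_le_one
    have hApos : ∀ x ∈ Metric.sphere (0 : Fin m → ℝ) 1, 0 < x ⬝ᵥ (A *ᵥ x) := by
      intro x hx
      have hx0 : x ≠ 0 := by
        intro h; simp [h] at hx
      simpa [star_trivial] using hA.dotProduct_mulVec_pos hx0
    have hcont : ContinuousOn (fun x : Fin m → ℝ => (x ⬝ᵥ (B *ᵥ x)) / (x ⬝ᵥ (A *ᵥ x)))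
        (Metric.sphere 0 1) :=
      ((qf_continuous B).continuousOn).div ((qf_continuous A).continuousOn)
        (fun x hx => (hApos x hx).ne')
    obtain ⟨x₀, hx₀, hmax⟩ := hS.exists_isMaxOn hSne hcont
    refine ⟨(x₀ ⬝ᵥ (B *ᵥ x₀)) / (x₀ ⬝ᵥ (A *ᵥ x₀)), fun e he => ?_⟩
    have hne : ‖e‖ ≠ 0 := norm_ne_zero_iff.mpr he
    set u : Fin m → ℝ := ‖e‖⁻¹ • e with hu
    have huS : u ∈ Metric.sphere (0 : Fin m → ℝ) 1 := by
      simp [hu, norm_smul, abs_of_nonneg (inv_nonneg.mpr (norm_nonneg e)),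
        inv_mul_cancel₀ hne]
    have hle := hmax huS
    have hval : (u ⬝ᵥ (B *ᵥ u)) / (u ⬝ᵥ (A *ᵥ u))
        = (e ⬝ᵥ (B *ᵥ e)) / (e ⬝ᵥ (A *ᵥ e)) := by
      rw [hu, qf_smul, qf_smul]
      have h2 : (‖e‖⁻¹)^2 ≠ 0 := pow_ne_zero 2 (inv_ne_zero hne)
      rw [mul_div_mul_left _ _ h2]
    rw [← hval]
    exact hle
  · exact ⟨0, fun e he => absurd (by push_neg at hex; exact hex e) he⟩

/-- GAMG two-grid convergence bound: with SPD `A`, invertible `M` with `M + Mᵀ − A` SPD,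
symmetrized smoother `M̃`, full-column-rank `P` and `R` with `RP = I`, setting
`K = sup_{e≠0} ‖(I − PR)e‖_{M̃}² / ‖e‖_A²` and
`E_TG = (I − M⁻¹A)(I − P(PᵀAP)⁻¹PᵀA)`, we have `‖E_TG‖_A² ≤ 1 − 1/K`. -/
theorem gamg_two_grid_convergence_bound {n nc : ℕ}
    (A M : Matrix (Fin n) (Fin n) ℝ) (hA : A.PosDef) (hM : IsUnit M)
    (hsm : (M + Mᵀ - A).PosDef)
    (Mt : Matrix (Fin n) (Fin n) ℝ)
    (hMt : Mt = M * (M + Mᵀ - A)⁻¹ * Mᵀ)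
    (P : Matrix (Fin n) (Fin nc) ℝ) (hPrank : Function.Injective P.mulVec)
    (R : Matrix (Fin nc) (Fin n) ℝ) (hRP : R * P = 1)
    (K : ℝ)
    (hK : K = sSup {r : ℝ | ∃ e : Fin n → ℝ, e ≠ 0 ∧
      r = (((1 - P * R) *ᵥ e) ⬝ᵥ (Mt *ᵥ ((1 - P * R) *ᵥ e))) / (e ⬝ᵥ (A *ᵥ e))})
    (E : Matrix (Fin n) (Fin n) ℝ)
    (hE : E = (1 - M⁻¹ * A) * (1 - P * (Pᵀ * A * P)⁻¹ * Pᵀ * A)) :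
    (sSup {r : ℝ | ∃ e : Fin n → ℝ, e ≠ 0 ∧
      r = Real.sqrt ((E *ᵥ e) ⬝ᵥ (A *ᵥ (E *ᵥ e))) / Real.sqrt (e ⬝ᵥ (A *ᵥ e))}) ^ 2
      ≤ 1 - 1 / K := by
  have hAt : Aᵀ = A := herm_transpose hA.isHermitian
  have hAdet : IsUnit A.det := (Matrix.isUnit_iff_isUnit_det A).mp hA.isUnit
  by_cases hRinj : Function.Injective R.mulVec
  · -- degenerate case: R injective, then P*R = 1, E = 0, K = 0
    have hPR : P * R = 1 := by
      have hid : ∀ x, (P * R) *ᵥ x = x := by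
        intro x
        apply hRinj
        rw [Matrix.mulVec_mulVec, ← Matrix.mul_assoc, hRP, Matrix.one_mul]
      ext i j
      have := congr_fun (hid (Pi.single j 1)) i
      simpa [Matrix.mulVec_single, Matrix.one_apply, Pi.single_apply, eq_comm] using this
    have hPi1 : P * (Pᵀ * A * P)⁻¹ * Pᵀ * A = 1 := by
      have hBinv : (Pᵀ * A * P) * (R * A⁻¹ * Rᵀ) = 1 := by
        have h1 : Pᵀ * A * P * (R * A⁻¹ * Rᵀ) = Pᵀ * (A * (P * R * (A⁻¹ * Rᵀ))) := by
          simp only [Matrix.mul_assoc]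
        rw [h1, hPR, Matrix.one_mul, ← Matrix.mul_assoc A, A.mul_nonsing_inv hAdet,
          Matrix.one_mul, ← Matrix.transpose_mul, hRP, Matrix.transpose_one]
      rw [Matrix.inv_eq_right_inv hBinv]
      have h2 : P * (R * A⁻¹ * Rᵀ) * Pᵀ * A = P * R * (A⁻¹ * (Rᵀ * Pᵀ * A)) := by
        simp only [Matrix.mul_assoc]
      rw [h2, hPR, Matrix.one_mul, ← Matrix.transpose_mul, hPR, Matrix.transpose_one,
        Matrix.one_mul, A.nonsing_inv_mul hAdet]
    have hE0 : E = 0 := by rw [hE, hPi1, sub_self, Matrix.mul_zero]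
    have hK0 : K = 0 := by
      rw [hK]
      apply le_antisymm
      · apply Real.sSup_le _ le_rfl
        rintro r ⟨e, he, rfl⟩
        rw [hPR, sub_self, Matrix.zero_mulVec, zero_dotProduct, zero_div]
      · apply Real.sSup_nonneg
        rintro r ⟨e, he, rfl⟩
        rw [hPR, sub_self, Matrix.zero_mulVec, zero_dotProduct, zero_div]
    rw [hK0]
    have hone : (1:ℝ) - 1/0 = 1 := by norm_num
    rw [hone]
    have h1 : sSup {r : ℝ | ∃ e : Fin n → ℝ, e ≠ 0 ∧
        r = Real.sqrt ((E *ᵥ e) ⬝ᵥ (A *ᵥ (E *ᵥ e))) / Real.sqrt (e ⬝ᵥ (A *ᵥ e))} ≤ 1 := by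
      apply Real.sSup_le _ zero_le_one
      rintro r ⟨e, he, rfl⟩
      rw [hE0, Matrix.zero_mulVec, zero_dotProduct, Real.sqrt_zero, zero_div]
      exact zero_le_one
    have h0 : (0:ℝ) ≤ sSup {r : ℝ | ∃ e : Fin n → ℝ, e ≠ 0 ∧
        r = Real.sqrt ((E *ᵥ e) ⬝ᵥ (A *ᵥ (E *ᵥ e))) / Real.sqrt (e ⬝ᵥ (A *ᵥ e))} := by
      apply Real.sSup_nonneg
      rintro r ⟨e, he, rfl⟩
      positivity
    nlinarith [h0, h1]
  · -- main case
    obtain ⟨e₀, he₀, hRe₀⟩ : ∃ e₀ : Fin n → ℝ, e₀ ≠ 0 ∧ R *ᵥ e₀ = 0 := by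
      rw [Function.not_injective_iff] at hRinj
      obtain ⟨a, b, hab, hne⟩ := hRinj
      exact ⟨a - b, sub_ne_zero.mpr hne, by rw [Matrix.mulVec_sub, hab, sub_self]⟩
    have hMdet : IsUnit M.det := (Matrix.isUnit_iff_isUnit_det M).mp hM
    have hMTdet : IsUnit Mᵀ.det := by rwa [Matrix.det_transpose]
    set X := M + Mᵀ - A with hX
    have hXt : Xᵀ = X := by
      rw [hX]
      simp only [Matrix.transpose_sub, Matrix.transpose_add, Matrix.transpose_transpose, hAt]
      abel
    have hXdet : IsUnit X.det := (Matrix.isUnit_iff_isUnit_det X).mp hsm.isUnit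
    set Ac := Pᵀ * A * P with hAc
    have hAcPD : Ac.PosDef := by
      refine Matrix.PosDef.of_dotProduct_mulVec_pos ?_ (fun x hx => ?_)
      · rw [Matrix.IsHermitian, Matrix.conjTranspose_eq_transpose_of_trivial, hAc]
        simp only [Matrix.transpose_mul, Matrix.transpose_transpose, hAt, Matrix.mul_assoc]
      · have hPx : P *ᵥ x ≠ 0 := fun h => hx (hPrank (by simpa using h))
        have h2 := hA.dotProduct_mulVec_pos hPx
        rw [star_trivial] at h2 ⊢
        rw [hAc, ← qform_shift]
        exact h2
    have hAcdet : IsUnit Ac.det := (Matrix.isUnit_iff_isUnit_det Ac).mp hAcPD.isUnit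
    haveI := M.invertibleOfIsUnitDet hMdet
    haveI := Mᵀ.invertibleOfIsUnitDet hMTdet
    haveI := X.invertibleOfIsUnitDet hXdet
    haveI := Ac.invertibleOfIsUnitDet hAcdet
    set T : Matrix (Fin n) (Fin n) ℝ := 1 - P * Ac⁻¹ * Pᵀ * A with hT
    set N : Matrix (Fin n) (Fin n) ℝ := 1 - M⁻¹ * A with hN
    set W : Matrix (Fin n) (Fin n) ℝ := (Mᵀ)⁻¹ * X * M⁻¹ with hW
    have hPAP : ∀ (Z : Matrix (Fin nc) (Fin n) ℝ), Pᵀ * (A * (P * Z)) = Ac * Z := by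
      intro Z; rw [hAc]; simp only [Matrix.mul_assoc]
    -- I1
    have hI1 : Pᵀ * A * T = 0 := by
      rw [hT, Matrix.mul_sub, Matrix.mul_one]
      have h1 : Pᵀ * A * (P * Ac⁻¹ * Pᵀ * A) = Ac * (Ac⁻¹ * (Pᵀ * A)) := by
        rw [hAc]; simp only [Matrix.mul_assoc]
      rw [h1, Matrix.mul_inv_cancel_left_of_invertible, sub_self]
    -- I2
    have hI2 : Tᵀ * A * T = A - A * (P * (Ac⁻¹ * (Pᵀ * A))) := by
      have hTt : Tᵀ = 1 - A * P * Ac⁻¹ * Pᵀ := by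
        rw [hT]
        simp only [Matrix.transpose_sub, Matrix.transpose_one, Matrix.transpose_mul,
          Matrix.transpose_transpose, hAt, Matrix.transpose_nonsing_inv]
        rw [herm_transpose hAcPD.isHermitian]
        simp only [Matrix.mul_assoc]
      rw [hTt, hT]
      simp only [Matrix.sub_mul, Matrix.mul_sub, Matrix.one_mul, Matrix.mul_one,
        Matrix.mul_assoc, hPAP, Matrix.mul_inv_cancel_left_of_invertible,
        Matrix.inv_mul_cancel_left_of_invertible]
      abel
    -- I3
    have hI3 : Mt * W = 1 := by
      rw [hMt, hW]
      have h1 : M * X⁻¹ * Mᵀ * ((Mᵀ)⁻¹ * X * M⁻¹) = M * (X⁻¹ * (Mᵀ * ((Mᵀ)⁻¹ * (X * M⁻¹)))) := by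
        simp only [Matrix.mul_assoc]
      rw [h1, Matrix.mul_inv_cancel_left_of_invertible,
        Matrix.inv_mul_cancel_left_of_invertible, Matrix.mul_inv_of_invertible]
    -- I4
    have hI4 : Nᵀ * A * N = A - A * (W * A) := by
      have hNt : Nᵀ = 1 - A * (Mᵀ)⁻¹ := by
        rw [hN]
        simp only [Matrix.transpose_sub, Matrix.transpose_one, Matrix.transpose_mul, hAt,
          Matrix.transpose_nonsing_inv]
      rw [hNt, hN, hW, hX]
      simp only [Matrix.sub_mul, Matrix.mul_sub, Matrix.mul_add, Matrix.add_mul,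
        Matrix.one_mul, Matrix.mul_one, Matrix.mul_assoc,
        Matrix.mul_inv_cancel_left_of_invertible, Matrix.inv_mul_cancel_left_of_invertible,
        Matrix.mul_inv_of_invertible, Matrix.inv_mul_of_invertible]
      abel
    -- I5
    have hI5 : Mt - A = (A - Mᵀ) * X⁻¹ * (A - Mᵀ)ᵀ := by
      have hTr : (A - Mᵀ)ᵀ = Mᵀ - X := by
        rw [Matrix.transpose_sub, Matrix.transpose_transpose, hAt, hX]; abel
      have hL : A - Mᵀ = M - X := by rw [hX]; abel
      rw [hTr, hL, hMt]
      simp only [Matrix.sub_mul, Matrix.mul_sub, Matrix.one_mul, Matrix.mul_one,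
        Matrix.mul_assoc,
        Matrix.mul_inv_cancel_left_of_invertible, Matrix.inv_mul_cancel_left_of_invertible,
        Matrix.mul_inv_of_invertible, Matrix.inv_mul_of_invertible]
      rw [hX]
      abel
    -- positivity facts
    have hMtPSD : Mt.PosSemidef := by
      have h := (hsm.inv.posSemidef).mul_mul_conjTranspose_same M
      rw [Matrix.conjTranspose_eq_transpose_of_trivial] at h
      rwa [hMt]
    have hMtPD : Mt.PosDef := by
      refine Matrix.PosDef.of_dotProduct_mulVec_pos hMtPSD.isHermitian (fun x hx => ?_)
      have hMTx : Mᵀ *ᵥ x ≠ 0 := by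
        intro h
        exact hx ((Matrix.mulVec_injective_iff_isUnit.mpr (by rwa [Matrix.isUnit_iff_isUnit_det, Matrix.det_transpose, ← Matrix.isUnit_iff_isUnit_det])) (by simpa using h))
      have h2 := hsm.inv.dotProduct_mulVec_pos hMTx
      rw [star_trivial] at h2 ⊢
      rw [hMt]
      have h3 := qform_shift Mᵀ X⁻¹ x
      rw [Matrix.transpose_transpose] at h3
      rw [← h3]
      exact h2
    have hWPSD : W.PosSemidef := by
      have h := (hsm.posSemidef).conjTranspose_mul_mul_same M⁻¹
      rw [Matrix.conjTranspose_eq_transpose_of_trivial, Matrix.transpose_nonsing_inv] at h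
      rwa [hW]
    have hWt : Wᵀ = W := herm_transpose hWPSD.isHermitian
    have hMtA : (Mt - A).PosSemidef := by
      rw [hI5]
      have h := (hsm.inv.posSemidef).mul_mul_conjTranspose_same (A - Mᵀ)
      rwa [Matrix.conjTranspose_eq_transpose_of_trivial] at h
    have hSPSD : (A * (P * (Ac⁻¹ * (Pᵀ * A)))).PosSemidef := by
      have h := (hAcPD.inv.posSemidef).conjTranspose_mul_mul_same (Pᵀ * A)
      rw [Matrix.conjTranspose_eq_transpose_of_trivial, Matrix.transpose_mul,
        Matrix.transpose_transpose, hAt] at h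
      have heq : A * P * Ac⁻¹ * (Pᵀ * A) = A * (P * (Ac⁻¹ * (Pᵀ * A))) := by
        simp only [Matrix.mul_assoc]
      rwa [heq] at h
    -- K-set facts
    set Kset := {r : ℝ | ∃ e : Fin n → ℝ, e ≠ 0 ∧
      r = (((1 - P * R) *ᵥ e) ⬝ᵥ (Mt *ᵥ ((1 - P * R) *ᵥ e))) / (e ⬝ᵥ (A *ᵥ e))} with hKset
    have hKbdd : BddAbove Kset := by
      obtain ⟨c, hc⟩ := exists_ratio_bound ((1 - P * R)ᵀ * Mt * (1 - P * R)) A hA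
      refine ⟨c, ?_⟩
      rintro r ⟨e, he, rfl⟩
      rw [qform_shift]
      exact hc e he
    have hKge : ∀ e : Fin n → ℝ, e ≠ 0 →
        (((1 - P * R) *ᵥ e) ⬝ᵥ (Mt *ᵥ ((1 - P * R) *ᵥ e))) / (e ⬝ᵥ (A *ᵥ e)) ≤ K := by
      intro e he
      rw [hK]
      exact le_csSup hKbdd ⟨e, he, rfl⟩
    have hApos : ∀ e : Fin n → ℝ, e ≠ 0 → 0 < e ⬝ᵥ (A *ᵥ e) := by
      intro e he
      simpa [star_trivial] using hA.dotProduct_mulVec_pos he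
    have hK1 : 1 ≤ K := by
      refine le_trans ?_ (hKge e₀ he₀)
      have hfix : (1 - P * R) *ᵥ e₀ = e₀ := by
        rw [Matrix.sub_mulVec, Matrix.one_mulVec, ← Matrix.mulVec_mulVec, hRe₀,
          Matrix.mulVec_zero, sub_zero]
      rw [hfix, le_div_iff₀ (hApos e₀ he₀), one_mul]
      have h := hMtA.dotProduct_mulVec_nonneg e₀
      rw [star_trivial, Matrix.sub_mulVec, dotProduct_sub] at h
      linarith
    have hKpos : (0:ℝ) < K := lt_of_lt_of_le one_pos hK1
    have hfrac : 0 ≤ 1 - 1/K := by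
      have : 1/K ≤ 1 := by rw [div_le_one hKpos]; exact hK1
      linarith
    -- pointwise bound
    have hpoint : ∀ e : Fin n → ℝ, e ≠ 0 →
        (E *ᵥ e) ⬝ᵥ (A *ᵥ (E *ᵥ e)) ≤ (1 - 1/K) * (e ⬝ᵥ (A *ᵥ e)) := by
      intro e he
      have hEe : E *ᵥ e = N *ᵥ (T *ᵥ e) := by
        rw [hE, hN, hT, ← Matrix.mulVec_mulVec]
      set eb := T *ᵥ e with heb
      set w := A *ᵥ eb with hw
      set a := eb ⬝ᵥ (A *ᵥ eb) with ha
      set b := w ⬝ᵥ (W *ᵥ w) with hb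
      have hlhs : (E *ᵥ e) ⬝ᵥ (A *ᵥ (E *ᵥ e)) = a - b := by
        rw [hEe, qform_shift, hI4, Matrix.sub_mulVec, dotProduct_sub]
        congr 1
        rw [← Matrix.mulVec_mulVec, ← Matrix.mulVec_mulVec, dot_symm hAt, ← hw,
          dot_shift, hWt]
      have hb0 : 0 ≤ b := by simpa [star_trivial] using hWPSD.dotProduct_mulVec_nonneg w
      have haA : a ≤ e ⬝ᵥ (A *ᵥ e) := by
        rw [ha, heb, qform_shift, hI2, Matrix.sub_mulVec, dotProduct_sub]
        have := hSPSD.dotProduct_mulVec_nonneg e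
        rw [star_trivial] at this
        linarith
      by_cases hebz : eb = 0
      · rw [hlhs, ha, hb, hw, hebz]
        simp only [Matrix.mulVec_zero, dotProduct_zero, zero_dotProduct, Matrix.mulVec_zero]
        simp only [sub_zero, zero_sub, neg_nonpos]
        have := hApos e he
        positivity
      · have hapos : 0 < a := hApos eb hebz
        set u := (1 - P * R) *ᵥ eb with hu
        have huw : u ⬝ᵥ w = a := by
          rw [hu, Matrix.sub_mulVec, Matrix.one_mulVec, sub_dotProduct]
          have hz : ((P * R) *ᵥ eb) ⬝ᵥ w = 0 := by
            have hPw : Pᵀ *ᵥ w = 0 := by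
              rw [hw, heb, Matrix.mulVec_mulVec, Matrix.mulVec_mulVec, hI1,
                Matrix.zero_mulVec]
            rw [← Matrix.mulVec_mulVec, dot_shift, hPw, dotProduct_zero]
          rw [hz, sub_zero, hw, ha]
        have hcs := psd_cs hMtPD.posSemidef u (W *ᵥ w)
        rw [Matrix.mulVec_mulVec, hI3, Matrix.one_mulVec] at hcs
        have hWMt : (W *ᵥ w) ⬝ᵥ w = b := by
          rw [dot_shift, hWt]
        rw [hWMt, huw] at hcs
        -- hcs : a^2 ≤ (u ⬝ᵥ Mt *ᵥ u) * b
        have hKu : u ⬝ᵥ (Mt *ᵥ u) ≤ K * a := by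
          have := hKge eb hebz
          rw [div_le_iff₀ (hApos eb hebz)] at this
          rw [hu, ha]
          exact this
        have hub : 0 ≤ u ⬝ᵥ (Mt *ᵥ u) := by simpa [star_trivial] using hMtPD.posSemidef.dotProduct_mulVec_nonneg u
        clear_value u b a w eb
        clear_value T N W X Ac Kset
        clear hI1 hI2 hI3 hI4 hI5 hPAP hEe hu ha hb hw heb hWMt huw hSPSD hMtA hWt hWPSD hMtPD hMtPSD hKbdd hKge hKset hK hE hRP hRe₀ hPrank hRinj hMt hsm hM hA hAt hAdet hXt
        have hab : a ≤ K * b := by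
          have h1 : a^2 ≤ K * a * b := le_trans hcs (by nlinarith)
          nlinarith
        have hba : a / K ≤ b := by
          rw [div_le_iff₀ hKpos]
          nlinarith
        rw [hlhs]
        have h2 : a - b ≤ a * (1 - 1/K) := by
          have : a / K = a * (1/K) := by ring
          nlinarith [hba]
        calc a - b ≤ a * (1 - 1/K) := h2
          _ ≤ (e ⬝ᵥ (A *ᵥ e)) * (1 - 1/K) := by nlinarith [haA, hfrac]
          _ = (1 - 1/K) * (e ⬝ᵥ (A *ᵥ e)) := by ring
    -- conclude
    set c := Real.sqrt (1 - 1/K) with hc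
    have hLub : ∀ r ∈ {r : ℝ | ∃ e : Fin n → ℝ, e ≠ 0 ∧
        r = Real.sqrt ((E *ᵥ e) ⬝ᵥ (A *ᵥ (E *ᵥ e))) / Real.sqrt (e ⬝ᵥ (A *ᵥ e))}, r ≤ c := by
      rintro r ⟨e, he, rfl⟩
      have hd := hApos e he
      have h1 : Real.sqrt ((E *ᵥ e) ⬝ᵥ (A *ᵥ (E *ᵥ e)))
          ≤ c * Real.sqrt (e ⬝ᵥ (A *ᵥ e)) := by
        rw [hc, ← Real.sqrt_mul hfrac]
        exact Real.sqrt_le_sqrt (hpoint e he)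
      rw [div_le_iff₀ (Real.sqrt_pos.mpr hd)]
      exact h1
    have hsup_le : sSup {r : ℝ | ∃ e : Fin n → ℝ, e ≠ 0 ∧
        r = Real.sqrt ((E *ᵥ e) ⬝ᵥ (A *ᵥ (E *ᵥ e))) / Real.sqrt (e ⬝ᵥ (A *ᵥ e))} ≤ c :=
      Real.sSup_le hLub (Real.sqrt_nonneg _)
    have hsup_0 : 0 ≤ sSup {r : ℝ | ∃ e : Fin n → ℝ, e ≠ 0 ∧
        r = Real.sqrt ((E *ᵥ e) ⬝ᵥ (A *ᵥ (E *ᵥ e))) / Real.sqrt (e ⬝ᵥ (A *ᵥ e))} := by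
      apply Real.sSup_nonneg
      rintro r ⟨e, he, rfl⟩
      positivity
    calc (sSup {r : ℝ | ∃ e : Fin n → ℝ, e ≠ 0 ∧
        r = Real.sqrt ((E *ᵥ e) ⬝ᵥ (A *ᵥ (E *ᵥ e))) / Real.sqrt (e ⬝ᵥ (A *ᵥ e))}) ^ 2
        ≤ c ^ 2 := by nlinarith [hsup_le, hsup_0]
      _ = 1 - 1/K := Real.sq_sqrt hfrac
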